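/- Let m and n be positive coprime integers and consider the action of the circle group on D² × S² given by g • (ζ, (w, t)) = (gᵐ·ζ, (gⁿ·w, t)). Then the orbit space of this action, i.e., the quotient of D² × S² by the orbit equivalence relation with the quotient topology, is homeomorphic to the closed unit ball in ℝ³. -/

import Mathlib

noncomputable section

/-- The closed unit disk `{ζ : ℂ | |ζ| ≤ 1}`. -/
abbrev D2 : Type := {ζ : ℂ // ‖ζ‖ ≤ 1}

/-- The unit 2-sphere `{(w, t) : ℂ × ℝ | |w|² + t² = 1}`. -/
abbrev S2 : Type := {p : ℂ × ℝ // ‖p.1‖ ^ 2 + p.2 ^ 2 = 1}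

/-- The Pao model circle action on `D² × S²`:
`g • (ζ, (w, t)) = (gᵐ·ζ, (gⁿ·w, t))`. -/
def paoAct (m n : ℕ) (g : Circle) (x : D2 × S2) : D2 × S2 :=
  (⟨(g : ℂ) ^ m * x.1.1, by
      simpa [norm_mul, norm_pow, Circle.norm_coe] using x.1.2⟩,
   ⟨((g : ℂ) ^ n * x.2.1.1, x.2.1.2), by
      simpa [norm_mul, norm_pow, Circle.norm_coe] using x.2.2⟩)

namespace Pao

open Complex

def rr (p : D2 × S2) : ℝ := ‖p.1.1‖
def ss (p : D2 × S2) : ℝ := ‖p.2.1.1‖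
def tt (p : D2 × S2) : ℝ := p.2.1.2

lemma rr_nonneg (p : D2 × S2) : 0 ≤ rr p := norm_nonneg _
lemma rr_le_one (p : D2 × S2) : rr p ≤ 1 := p.1.2
lemma ss_nonneg (p : D2 × S2) : 0 ≤ ss p := norm_nonneg _
lemma ss_sq (p : D2 × S2) : ss p ^ 2 = 1 - tt p ^ 2 := by
  have := p.2.2; unfold ss tt; linarith
lemma tt_sq_le_one (p : D2 × S2) : tt p ^ 2 ≤ 1 := by
  have h := ss_sq p; have := ss_nonneg p; nlinarith

def Zc (m n : ℕ) (p : D2 × S2) : ℂ :=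
  if rr p * ss p = 0 then 0
  else p.1.1 ^ n * (starRingEnd ℂ) p.2.1.1 ^ m /
    ((rr p : ℂ) ^ (n - 1) * (ss p : ℂ) ^ (m - 1))

def Yr (p : D2 × S2) : ℝ := tt p * (1 + rr p) / 2

lemma abs_Zc (m n : ℕ) (hm : 0 < m) (hn : 0 < n) (p : D2 × S2) :
    ‖Zc m n p‖ = rr p * ss p := by
  unfold Zc
  split_ifs with h
  · simp [h.symm]
  · have hr : rr p ≠ 0 := fun h0 => h (by rw [h0, zero_mul])
    have hs : ss p ≠ 0 := fun h0 => h (by rw [h0, mul_zero])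
    have hr' : 0 < rr p := lt_of_le_of_ne (rr_nonneg p) (Ne.symm hr)
    have hs' : 0 < ss p := lt_of_le_of_ne (ss_nonneg p) (Ne.symm hs)
    rw [norm_div, norm_mul, norm_mul, norm_pow, norm_pow, norm_pow, norm_pow]
    rw [Complex.norm_conj, Complex.norm_real, Complex.norm_real, Real.norm_eq_abs, Real.norm_eq_abs,
      _root_.abs_of_nonneg (rr_nonneg p), _root_.abs_of_nonneg (ss_nonneg p)]
    show rr p ^ n * ss p ^ m / (rr p ^ (n-1) * ss p ^ (m-1)) = rr p * ss p
    have h1 : rr p ^ n = rr p ^ (n-1) * rr p := by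
      rw [← pow_succ]; congr 1; omega
    have h2 : ss p ^ m = ss p ^ (m-1) * ss p := by
      rw [← pow_succ]; congr 1; omega
    rw [h1, h2]
    field_simp

lemma rr_act (m n : ℕ) (g : Circle) (p : D2 × S2) : rr (paoAct m n g p) = rr p := by
  unfold rr paoAct
  simp [norm_mul, norm_pow, Circle.norm_coe]

lemma ss_act (m n : ℕ) (g : Circle) (p : D2 × S2) : ss (paoAct m n g p) = ss p := by
  unfold ss paoAct
  simp [norm_mul, norm_pow, Circle.norm_coe]

lemma tt_act (m n : ℕ) (g : Circle) (p : D2 × S2) : tt (paoAct m n g p) = tt p := rfl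

lemma Zc_act (m n : ℕ) (g : Circle) (p : D2 × S2) :
    Zc m n (paoAct m n g p) = Zc m n p := by
  unfold Zc
  rw [rr_act, ss_act]
  split_ifs with h
  · rfl
  · congr 1
    show ((g : ℂ) ^ m * p.1.1) ^ n * (starRingEnd ℂ) ((g : ℂ) ^ n * p.2.1.1) ^ m
        = p.1.1 ^ n * (starRingEnd ℂ) p.2.1.1 ^ m
    have key : (g : ℂ) * (starRingEnd ℂ) (g : ℂ) = 1 := by
      rw [Complex.mul_conj]
      norm_cast
      simp [Circle.normSq_coe]
    calc ((g : ℂ) ^ m * p.1.1) ^ n * (starRingEnd ℂ) ((g : ℂ) ^ n * p.2.1.1) ^ m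
        = ((g : ℂ) * (starRingEnd ℂ) (g : ℂ)) ^ (m * n) *
            (p.1.1 ^ n * (starRingEnd ℂ) p.2.1.1 ^ m) := by
          rw [map_mul, map_pow]
          ring
      _ = p.1.1 ^ n * (starRingEnd ℂ) p.2.1.1 ^ m := by rw [key, one_pow, one_mul]

end Pao

namespace Pao

open Complex

lemma continuous_rr : Continuous rr :=
  continuous_norm.comp (continuous_subtype_val.comp continuous_fst)

lemma continuous_ss : Continuous ss :=
  continuous_norm.comp
    (continuous_fst.comp (continuous_subtype_val.comp continuous_snd))

lemma continuous_tt : Continuous tt :=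
  continuous_snd.comp (continuous_subtype_val.comp continuous_snd)

lemma continuous_Yr : Continuous Yr := by
  unfold Yr
  exact (continuous_tt.mul (continuous_const.add continuous_rr)).div_const 2

lemma continuous_Zc (m n : ℕ) (hm : 0 < m) (hn : 0 < n) : Continuous (Zc m n) := by
  rw [continuous_iff_continuousAt]
  intro p
  by_cases h : rr p * ss p = 0
  · have hZp : Zc m n p = 0 := by unfold Zc; rw [if_pos h]
    rw [ContinuousAt, hZp]
    apply squeeze_zero_norm (a := fun q => rr q * ss q)
    · intro q
      rw [abs_Zc m n hm hn q]
    · have : Continuous fun q => rr q * ss q := continuous_rr.mul continuous_ss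
      rw [← h]
      exact this.continuousAt
  · have hU : IsOpen {q : D2 × S2 | rr q * ss q ≠ 0} :=
      isOpen_compl_singleton.preimage (continuous_rr.mul continuous_ss)
    have hden : ((rr p : ℂ) ^ (n - 1) * (ss p : ℂ) ^ (m - 1)) ≠ 0 := by
      have hr : rr p ≠ 0 := fun h0 => h (by rw [h0, zero_mul])
      have hs : ss p ≠ 0 := fun h0 => h (by rw [h0, mul_zero])
      exact mul_ne_zero (pow_ne_zero _ (by exact_mod_cast hr))
        (pow_ne_zero _ (by exact_mod_cast hs))
    have hf : ContinuousAt (fun q : D2 × S2 =>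
        q.1.1 ^ n * (starRingEnd ℂ) q.2.1.1 ^ m /
          ((rr q : ℂ) ^ (n - 1) * (ss q : ℂ) ^ (m - 1))) p := by
      apply ContinuousAt.div
      · exact (((continuous_subtype_val.comp continuous_fst).pow n).mul
          ((continuous_star.comp (continuous_fst.comp
            (continuous_subtype_val.comp continuous_snd))).pow m)).continuousAt
      · apply ContinuousAt.mul
        · exact (Complex.continuous_ofReal.comp continuous_rr).continuousAt.pow _
        · exact (Complex.continuous_ofReal.comp continuous_ss).continuousAt.pow _
      · exact hden
    apply hf.congr
    apply Filter.eventuallyEq_of_mem (hU.mem_nhds h)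
    intro q hq
    unfold Zc
    rw [if_neg hq]

def Fm (m n : ℕ) (p : D2 × S2) : EuclideanSpace ℝ (Fin 3) :=
  (WithLp.equiv 2 (Fin 3 → ℝ)).symm ![(Zc m n p).re, (Zc m n p).im, Yr p]

lemma continuous_Fm (m n : ℕ) (hm : 0 < m) (hn : 0 < n) : Continuous (Fm m n) := by
  apply (PiLp.continuous_toLp 2 (fun _ : Fin 3 => ℝ)).comp
  apply continuous_pi
  intro i
  fin_cases i
  · exact Complex.continuous_re.comp (continuous_Zc m n hm hn)
  · exact Complex.continuous_im.comp (continuous_Zc m n hm hn)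
  · simpa using continuous_Yr

lemma Fm_apply (m n : ℕ) (p : D2 × S2) (i : Fin 3) :
    Fm m n p i = ![(Zc m n p).re, (Zc m n p).im, Yr p] i := rfl

lemma norm_Fm_le (m n : ℕ) (hm : 0 < m) (hn : 0 < n) (p : D2 × S2) :
    ‖Fm m n p‖ ≤ 1 := by
  rw [EuclideanSpace.norm_eq]
  rw [show (1 : ℝ) = Real.sqrt 1 by simp]
  apply Real.sqrt_le_sqrt
  rw [Fin.sum_univ_three]
  simp only [Fm_apply, Matrix.cons_val_zero, Matrix.cons_val_one, Matrix.head_cons,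
    Matrix.cons_val_two, Matrix.tail_cons, Real.norm_eq_abs]
  rw [_root_.sq_abs, _root_.sq_abs, _root_.sq_abs]
  have hz : (Zc m n p).re ^ 2 + (Zc m n p).im ^ 2 = (rr p * ss p) ^ 2 := by
    rw [← abs_Zc m n hm hn p, Complex.sq_norm, Complex.normSq_apply]; ring
  rw [hz]
  unfold Yr
  have h1 := rr_nonneg p
  have h2 := rr_le_one p
  have h3 := ss_sq p
  have h4 := tt_sq_le_one p
  nlinarith [sq_nonneg (tt p), sq_nonneg (rr p * ss p), sq_nonneg (1 - rr p)]

end Pao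

namespace Pao

lemma phi_lt_absurd {r1 r2 t1 t2 s1 s2 : ℝ}
    (hr1 : 0 ≤ r1) (hr2 : 0 ≤ r2)
    (hs1 : 0 ≤ s1) (hs2 : 0 ≤ s2)
    (hsq1 : s1 ^ 2 = 1 - t1 ^ 2) (hsq2 : s2 ^ 2 = 1 - t2 ^ 2)
    (hx : r1 * s1 = r2 * s2) (hy : t1 * (1 + r1) = t2 * (1 + r2))
    (hlt : t1 < t2) : False := by
  rcases le_or_gt 0 t1 with h1 | h1
  · -- 0 ≤ t1 < t2
    have ht2pos : 0 < t2 := lt_of_le_of_lt h1 hlt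
    have hrlt : r2 < r1 := by nlinarith
    have hslt : s2 < s1 := by nlinarith
    have hr1pos : 0 < r1 := lt_of_le_of_lt hr2 hrlt
    have hs1pos : 0 < s1 := lt_of_le_of_lt hs2 hslt
    nlinarith
  · rcases le_or_gt t2 0 with h2 | h2
    · -- t1 < t2 ≤ 0
      have hrlt : r1 < r2 := by nlinarith
      have hslt : s1 < s2 := by nlinarith
      have hr2pos : 0 < r2 := lt_of_le_of_lt hr1 hrlt
      have hs2pos : 0 < s2 := lt_of_le_of_lt hs1 hslt
      nlinarith
    · -- t1 < 0 < t2
      nlinarith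

lemma phi_inj {r1 r2 t1 t2 s1 s2 : ℝ}
    (hr1 : 0 ≤ r1) (hr2 : 0 ≤ r2)
    (hs1 : 0 ≤ s1) (hs2 : 0 ≤ s2)
    (hsq1 : s1 ^ 2 = 1 - t1 ^ 2) (hsq2 : s2 ^ 2 = 1 - t2 ^ 2)
    (hx : r1 * s1 = r2 * s2) (hy : t1 * (1 + r1) = t2 * (1 + r2)) :
    r1 = r2 ∧ t1 = t2 ∧ s1 = s2 := by
  have ht : t1 = t2 := by
    rcases lt_trichotomy t1 t2 with h | h | h
    · exact absurd (phi_lt_absurd hr1 hr2 hs1 hs2 hsq1 hsq2 hx hy h) (fun f => f)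
    · exact h
    · exact absurd
        (phi_lt_absurd hr2 hr1 hs2 hs1 hsq2 hsq1 hx.symm hy.symm h) (fun f => f)
  have hs : s1 = s2 := by
    have h12 : s1 ^ 2 = s2 ^ 2 := by rw [hsq1, hsq2, ht]
    calc s1 = Real.sqrt (s1 ^ 2) := (Real.sqrt_sq hs1).symm
      _ = Real.sqrt (s2 ^ 2) := by rw [h12]
      _ = s2 := Real.sqrt_sq hs2
  refine ⟨?_, ht, hs⟩
  by_cases hs0 : s1 = 0
  · have ht1 : t1 ≠ 0 := by
      intro h0
      rw [h0] at hsq1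
      nlinarith [hs0]
    have : t1 * (1 + r1) = t1 * (1 + r2) := by rw [hy, ht]
    have := mul_left_cancel₀ ht1 this
    linarith
  · have hs1pos : 0 < s1 := lt_of_le_of_ne hs1 (Ne.symm hs0)
    have : r1 * s1 = r2 * s1 := by rw [hx, hs]
    exact mul_right_cancel₀ (ne_of_gt hs1pos) this

lemma phi_surj (X Y : ℝ) (hX : 0 ≤ X) (h : X ^ 2 + Y ^ 2 ≤ 1) :
    ∃ r t : ℝ, 0 ≤ r ∧ r ≤ 1 ∧ -1 ≤ t ∧ t ≤ 1 ∧
      r * Real.sqrt (1 - t ^ 2) = X ∧ t * (1 + r) / 2 = Y := by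
  rcases eq_or_lt_of_le hX with hX0 | hXpos
  · -- X = 0
    by_cases hY : |Y| ≤ 1 / 2
    · rcases abs_le.mp hY with ⟨hY1, hY2⟩
      exact ⟨0, 2 * Y, le_refl 0, zero_le_one, by linarith, by linarith,
        by rw [zero_mul, ← hX0], by ring⟩
    · push_neg at hY
      rcases le_or_gt Y 0 with hyneg | hypos
      · have hYlt : Y < -(1 / 2) := by
          rcases abs_cases Y with ⟨h1, h2⟩ | ⟨h1, h2⟩ <;> linarith
        refine ⟨-2 * Y - 1, -1, by linarith, by nlinarith, by linarith,
          by linarith, ?_, by ring⟩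
        have : (1 : ℝ) - (-1) ^ 2 = 0 := by ring
        rw [this, Real.sqrt_zero, mul_zero, ← hX0]
      · have hYgt : 1 / 2 < Y := by
          rcases abs_cases Y with ⟨h1, h2⟩ | ⟨h1, h2⟩ <;> linarith
        refine ⟨2 * Y - 1, 1, by linarith, by nlinarith, by linarith,
          by linarith, ?_, by ring⟩
        have : (1 : ℝ) - (1 : ℝ) ^ 2 = 0 := by ring
        rw [this, Real.sqrt_zero, mul_zero, ← hX0]
  · -- 0 < X
    set T := Real.sqrt (1 - X ^ 2) with hT
    have hX1 : X ^ 2 ≤ 1 := by nlinarith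
    have hT2 : T ^ 2 = 1 - X ^ 2 := Real.sq_sqrt (by nlinarith)
    have hTnn : 0 ≤ T := Real.sqrt_nonneg _
    have hYT : |Y| ≤ T := by
      have h1 : Real.sqrt (Y ^ 2) ≤ T := Real.sqrt_le_sqrt (by nlinarith)
      rwa [Real.sqrt_sq_eq_abs] at h1
    set f : ℝ → ℝ := fun t => t * (1 + X / Real.sqrt (1 - t ^ 2)) / 2 with hf
    have hsqrt_pos : ∀ t ∈ Set.Icc (-T) T, 0 < 1 - t ^ 2 := by
      intro t ht
      have := sq_le_sq' ht.1 ht.2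
      nlinarith
    have hc : ContinuousOn f (Set.Icc (-T) T) := by
      apply ContinuousOn.div_const
      apply ContinuousOn.mul continuousOn_id
      apply ContinuousOn.add continuousOn_const
      apply ContinuousOn.div continuousOn_const
      · exact (Real.continuous_sqrt.comp
          (continuous_const.sub (continuous_pow 2))).continuousOn
      · intro t ht
        exact ne_of_gt (Real.sqrt_pos.mpr (hsqrt_pos t ht))
    have hsT : Real.sqrt (1 - T ^ 2) = X := by
      rw [hT2, show 1 - (1 - X ^ 2) = X ^ 2 by ring, Real.sqrt_sq hXpos.le]
    have hfT : f T = T := by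
      rw [hf]
      simp only
      rw [hsT, div_self (ne_of_gt hXpos)]
      ring
    have hfnT : f (-T) = -T := by
      rw [hf]
      simp only
      rw [neg_pow, show ((-1:ℝ))^2 = 1 by ring, one_mul, hsT,
        div_self (ne_of_gt hXpos)]
      ring
    have hY' : Y ∈ Set.Icc (f (-T)) (f T) := by
      rw [hfT, hfnT]
      rcases abs_le.mp hYT with ⟨h1, h2⟩
      exact ⟨h1, h2⟩
    obtain ⟨t, htmem, htY⟩ :=
      intermediate_value_Icc (neg_le_self hTnn) hc hY'
    have hpos : 0 < 1 - t ^ 2 := hsqrt_pos t htmem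
    set s := Real.sqrt (1 - t ^ 2) with hsdef
    have hs2 : s ^ 2 = 1 - t ^ 2 := Real.sq_sqrt hpos.le
    have hspos : 0 < s := Real.sqrt_pos.mpr hpos
    have ht2 : t ^ 2 ≤ T ^ 2 := sq_le_sq' htmem.1 htmem.2
    have hXs : X ≤ s := by nlinarith
    have hT1 : T ≤ 1 := by nlinarith
    refine ⟨X / s, t, by positivity, ?_, ?_, ?_, ?_, ?_⟩
    · rw [div_le_one hspos]; exact hXs
    · have := htmem.1; linarith
    · have := htmem.2; linarith
    · rw [← hsdef, div_mul_cancel₀ _ (ne_of_gt hspos)]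
    · exact htY

end Pao

namespace Pao

open Complex

lemma exists_circle_pow_eq (k : ℕ) (hk : 0 < k) (c : ℂ) (hc : ‖c‖ = 1) :
    ∃ g : Circle, (g : ℂ) ^ k = c := by
  refine ⟨Circle.exp (c.arg / k), ?_⟩
  rw [Circle.coe_exp, ← Complex.exp_nat_mul]
  have hkne : (k : ℂ) ≠ 0 := Nat.cast_ne_zero.mpr hk.ne'
  have heq : (k : ℂ) * (↑(c.arg / k) * Complex.I) = ↑c.arg * Complex.I := by
    push_cast
    field_simp
  rw [heq]
  have h2 := Complex.norm_mul_exp_arg_mul_I c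
  rwa [hc, Complex.ofReal_one, one_mul] at h2

def mkCircle (a : ℂ) (ha : ‖a‖ = 1) : Circle :=
  ⟨a, by
    show a ∈ Metric.sphere (0 : ℂ) 1
    rw [mem_sphere_zero_iff_norm, ha]⟩

@[simp] lemma mkCircle_coe (a : ℂ) (ha : ‖a‖ = 1) :
    ((mkCircle a ha : Circle) : ℂ) = a := rfl

lemma orbit_of_Fm_eq (m n : ℕ) (hm : 0 < m) (hn : 0 < n) (hmn : Nat.Coprime m n)
    (p q : D2 × S2) (hF : Fm m n p = Fm m n q) :
    ∃ g : Circle, paoAct m n g p = q := by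
  have h0 : (Zc m n p).re = (Zc m n q).re := by
    have := congrArg (fun v : EuclideanSpace ℝ (Fin 3) => v 0) hF
    simpa [Fm_apply] using this
  have h1 : (Zc m n p).im = (Zc m n q).im := by
    have := congrArg (fun v : EuclideanSpace ℝ (Fin 3) => v 1) hF
    simpa [Fm_apply] using this
  have hY : Yr p = Yr q := by
    have := congrArg (fun v : EuclideanSpace ℝ (Fin 3) => v 2) hF
    simpa [Fm_apply] using this
  have hZ : Zc m n p = Zc m n q := Complex.ext h0 h1
  have habs : rr p * ss p = rr q * ss q := by
    rw [← abs_Zc m n hm hn, hZ, abs_Zc m n hm hn]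
  have hyy : tt p * (1 + rr p) = tt q * (1 + rr q) := by
    unfold Yr at hY; linarith
  obtain ⟨hr, ht, hs⟩ := phi_inj (rr_nonneg p) (rr_nonneg q) (ss_nonneg p)
    (ss_nonneg q) (ss_sq p) (ss_sq q) habs hyy
  suffices h : ∃ g : Circle, (g : ℂ) ^ m * p.1.1 = q.1.1 ∧
      (g : ℂ) ^ n * p.2.1.1 = q.2.1.1 by
    obtain ⟨g, hg1, hg2⟩ := h
    exact ⟨g, Prod.ext (Subtype.ext hg1) (Subtype.ext (Prod.ext hg2 ht))⟩
  by_cases hrz : rr p = 0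
  · have hζ1 : p.1.1 = 0 := norm_eq_zero.mp hrz
    have hζ2 : q.1.1 = 0 := norm_eq_zero.mp (by rw [show ‖q.1.1‖ = rr q from rfl, ← hr]; exact hrz)
    by_cases hsz : ss p = 0
    · have hw1 : p.2.1.1 = 0 := norm_eq_zero.mp hsz
      have hw2 : q.2.1.1 = 0 := norm_eq_zero.mp (by rw [show ‖q.2.1.1‖ = ss q from rfl, ← hs]; exact hsz)
      exact ⟨1, by simp [hζ1, hζ2, hw1, hw2]⟩
    · have hw1 : p.2.1.1 ≠ 0 := fun h0 => hsz (by rw [ss, h0, norm_zero])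
      have hb : ‖q.2.1.1 / p.2.1.1‖ = 1 := by
        rw [norm_div]
        show ss q / ss p = 1
        rw [← hs]
        exact div_self hsz
      obtain ⟨g, hg⟩ := exists_circle_pow_eq n hn _ hb
      refine ⟨g, by rw [hζ1, hζ2, mul_zero], ?_⟩
      rw [hg, div_mul_cancel₀ _ hw1]
  · by_cases hsz : ss p = 0
    · have hw1 : p.2.1.1 = 0 := norm_eq_zero.mp hsz
      have hw2 : q.2.1.1 = 0 := norm_eq_zero.mp (by rw [show ‖q.2.1.1‖ = ss q from rfl, ← hs]; exact hsz)
      have hζ1 : p.1.1 ≠ 0 := fun h0 => hrz (by rw [rr, h0, norm_zero])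
      have ha : ‖q.1.1 / p.1.1‖ = 1 := by
        rw [norm_div]
        show rr q / rr p = 1
        rw [← hr]
        exact div_self hrz
      obtain ⟨g, hg⟩ := exists_circle_pow_eq m hm _ ha
      refine ⟨g, ?_, by rw [hw1, hw2, mul_zero]⟩
      rw [hg, div_mul_cancel₀ _ hζ1]
    · -- main case: both nonzero
      have hζ1 : p.1.1 ≠ 0 := fun h0 => hrz (by rw [rr, h0, norm_zero])
      have hw1 : p.2.1.1 ≠ 0 := fun h0 => hsz (by rw [ss, h0, norm_zero])
      have hζ2 : q.1.1 ≠ 0 := fun h0 => hrz (hr ▸ (by rw [rr, h0, norm_zero]))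
      have hw2 : q.2.1.1 ≠ 0 := fun h0 => hsz (hs ▸ (by rw [ss, h0, norm_zero]))
      set a : ℂ := q.1.1 / p.1.1 with hadef
      set b : ℂ := q.2.1.1 / p.2.1.1 with hbdef
      have ha : ‖a‖ = 1 := by
        rw [hadef, norm_div]
        show rr q / rr p = 1
        rw [← hr]; exact div_self hrz
      have hb : ‖b‖ = 1 := by
        rw [hbdef, norm_div]
        show ss q / ss p = 1
        rw [← hs]; exact div_self hsz
      have hane : a ≠ 0 := fun h0 => by rw [h0, norm_zero] at ha; norm_num at ha
      have hbne : b ≠ 0 := fun h0 => by rw [h0, norm_zero] at hb; norm_num at hb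
      -- numerator equality
      have hnum : p.1.1 ^ n * (starRingEnd ℂ) p.2.1.1 ^ m
          = q.1.1 ^ n * (starRingEnd ℂ) q.2.1.1 ^ m := by
        have h := hZ
        unfold Zc at h
        rw [if_neg (mul_ne_zero hrz hsz),
          if_neg (by rw [← hr, ← hs]; exact mul_ne_zero hrz hsz)] at h
        rw [← hr, ← hs] at h
        have hden : ((rr p : ℂ) ^ (n - 1) * (ss p : ℂ) ^ (m - 1)) ≠ 0 :=
          mul_ne_zero (pow_ne_zero _ (by exact_mod_cast hrz))
            (pow_ne_zero _ (by exact_mod_cast hsz))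
        have h2 := (div_eq_div_iff hden hden).mp h
        exact mul_right_cancel₀ hden h2
      have hcw1 : (starRingEnd ℂ) p.2.1.1 * p.2.1.1 = ((ss p : ℂ)) ^ 2 := by
        rw [mul_comm, Complex.mul_conj, Complex.normSq_eq_norm_sq]
        push_cast
        rfl
      have hcw2 : (starRingEnd ℂ) q.2.1.1 * q.2.1.1 = ((ss p : ℂ)) ^ 2 := by
        rw [mul_comm, Complex.mul_conj, Complex.normSq_eq_norm_sq, hs]
        push_cast
        rfl
      have step : p.1.1 ^ n * ((starRingEnd ℂ) p.2.1.1 * p.2.1.1) ^ m * q.2.1.1 ^ m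
          = q.1.1 ^ n * ((starRingEnd ℂ) q.2.1.1 * q.2.1.1) ^ m * p.2.1.1 ^ m := by
        calc p.1.1 ^ n * ((starRingEnd ℂ) p.2.1.1 * p.2.1.1) ^ m * q.2.1.1 ^ m
            = (p.1.1 ^ n * (starRingEnd ℂ) p.2.1.1 ^ m) *
              (p.2.1.1 ^ m * q.2.1.1 ^ m) := by ring
          _ = (q.1.1 ^ n * (starRingEnd ℂ) q.2.1.1 ^ m) *
              (p.2.1.1 ^ m * q.2.1.1 ^ m) := by rw [hnum]
          _ = _ := by ring
      rw [hcw1, hcw2] at step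
      have hSne : (((ss p : ℂ)) ^ 2) ^ m ≠ 0 :=
        pow_ne_zero _ (pow_ne_zero _ (by exact_mod_cast hsz))
      have hcancel : p.1.1 ^ n * q.2.1.1 ^ m = q.1.1 ^ n * p.2.1.1 ^ m := by
        apply mul_right_cancel₀ hSne
        linear_combination step
      have hab : a ^ n = b ^ m := by
        rw [hadef, hbdef, div_pow, div_pow,
          div_eq_div_iff (pow_ne_zero _ hζ1) (pow_ne_zero _ hw1)]
        linear_combination -hcancel
      obtain ⟨u, v, huv⟩ : ∃ u v : ℤ, u * (m : ℤ) + v * (n : ℤ) = 1 := by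
        have : IsCoprime (m : ℤ) (n : ℤ) :=
          Int.isCoprime_iff_gcd_eq_one.mpr (by simpa using hmn)
        exact this
      set A : Circle := mkCircle a ha
      set B : Circle := mkCircle b hb
      have hcoe : ((A ^ u * B ^ v : Circle) : ℂ) = a ^ u * b ^ v := rfl
      refine ⟨A ^ u * B ^ v, ?_, ?_⟩
      · have hpow : (a ^ u * b ^ v) ^ m = a := by
          rw [mul_pow, ← zpow_natCast (a ^ u) m, ← zpow_natCast (b ^ v) m,
            ← zpow_mul, ← zpow_mul]
          have hbvm : b ^ (v * (m : ℤ)) = a ^ ((n : ℤ) * v) := by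
            rw [mul_comm v (m : ℤ), zpow_mul, zpow_mul, zpow_natCast, zpow_natCast,
              ← hab]
          rw [hbvm, ← zpow_add₀ hane,
            show u * (m : ℤ) + (n : ℤ) * v = 1 by linear_combination huv, zpow_one]
        rw [hcoe, hpow, hadef, div_mul_cancel₀ _ hζ1]
      · have hpow : (a ^ u * b ^ v) ^ n = b := by
          rw [mul_pow, ← zpow_natCast (a ^ u) n, ← zpow_natCast (b ^ v) n,
            ← zpow_mul, ← zpow_mul]
          have haun : a ^ (u * (n : ℤ)) = b ^ ((m : ℤ) * u) := by
            rw [mul_comm u (n : ℤ), zpow_mul, zpow_mul, zpow_natCast, zpow_natCast,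
              hab]
          rw [haun, ← zpow_add₀ hbne,
            show (m : ℤ) * u + v * (n : ℤ) = 1 by linear_combination huv, zpow_one]
        rw [hcoe, hpow, hbdef, div_mul_cancel₀ _ hw1]

end Pao

namespace Pao

open Complex

lemma Fm_act (m n : ℕ) (g : Circle) (p : D2 × S2) :
    Fm m n (paoAct m n g p) = Fm m n p := by
  unfold Fm Yr
  rw [Zc_act, rr_act, tt_act]

lemma Fm_surj (m n : ℕ) (hm : 0 < m) (hn : 0 < n)
    (v : EuclideanSpace ℝ (Fin 3)) (hv : ‖v‖ ≤ 1) :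
    ∃ p : D2 × S2, Fm m n p = v := by
  set Z0 : ℂ := ⟨v 0, v 1⟩ with hZ0
  set X := ‖Z0‖ with hX
  have hXnn : 0 ≤ X := norm_nonneg _
  have hX2 : X ^ 2 = v 0 ^ 2 + v 1 ^ 2 := by
    rw [hX, Complex.sq_norm, Complex.normSq_apply, hZ0]
    simp [pow_two]
  have hsum : v 0 ^ 2 + v 1 ^ 2 + v 2 ^ 2 ≤ 1 := by
    have h1 : ‖v‖ ^ 2 ≤ 1 := by nlinarith [norm_nonneg v]
    rw [EuclideanSpace.norm_eq, Real.sq_sqrt (by positivity)] at h1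
    rw [Fin.sum_univ_three] at h1
    simpa [Real.norm_eq_abs, _root_.sq_abs] using h1
  have hXY : X ^ 2 + (v 2) ^ 2 ≤ 1 := by rw [hX2]; linarith
  obtain ⟨r, t, hr0, hr1, ht0, ht1, hrt, hty⟩ := phi_surj X (v 2) hXnn hXY
  set s := Real.sqrt (1 - t ^ 2) with hsdef
  have hs0 : 0 ≤ s := Real.sqrt_nonneg _
  have hs2 : s ^ 2 = 1 - t ^ 2 := Real.sq_sqrt (by nlinarith)
  set e : ℂ := Complex.exp (↑(Z0.arg / n) * Complex.I) with hedef
  have habse : ‖e‖ = 1 := by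
    rw [hedef, Complex.norm_exp]
    simp
  have hmem1 : ‖(r : ℂ) * e‖ ≤ 1 := by
    rw [norm_mul, habse, mul_one, Complex.norm_real, Real.norm_eq_abs, _root_.abs_of_nonneg hr0]
    exact hr1
  have hmem2 : ‖(s : ℂ)‖ ^ 2 + t ^ 2 = 1 := by
    rw [Complex.norm_real, Real.norm_eq_abs, _root_.abs_of_nonneg hs0]
    linarith
  set p : D2 × S2 := (⟨(r : ℂ) * e, hmem1⟩, ⟨((s : ℂ), t), hmem2⟩) with hpdef
  have hrrp : rr p = r := by
    show ‖(r : ℂ) * e‖ = r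
    rw [norm_mul, habse, mul_one, Complex.norm_real, Real.norm_eq_abs, _root_.abs_of_nonneg hr0]
  have hssp : ss p = s := by
    show ‖(s : ℂ)‖ = s
    rw [Complex.norm_real, Real.norm_eq_abs, _root_.abs_of_nonneg hs0]
  have httt : tt p = t := rfl
  have hZeq : Zc m n p = Z0 := by
    unfold Zc
    rw [hrrp, hssp]
    by_cases hrs : r * s = 0
    · rw [if_pos hrs]
      have : X = 0 := by rw [← hrt]; rw [hsdef] at hrs ⊢; linarith [hrs]
      have := norm_eq_zero.mp (by rw [← hX]; exact this)
      rw [this]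
    · rw [if_neg hrs]
      have hrne : r ≠ 0 := fun h => hrs (by rw [h, zero_mul])
      have hsne : s ≠ 0 := fun h => hrs (by rw [h, mul_zero])
      have hen : e ^ n = Complex.exp (↑Z0.arg * Complex.I) := by
        rw [hedef, ← Complex.exp_nat_mul]
        congr 1
        have hnne : (n : ℂ) ≠ 0 := Nat.cast_ne_zero.mpr hn.ne'
        push_cast
        field_simp
      show ((r : ℂ) * e) ^ n * (starRingEnd ℂ) ((s : ℂ)) ^ m /
          ((r : ℂ) ^ (n - 1) * (s : ℂ) ^ (m - 1)) = Z0
      rw [Complex.conj_ofReal]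
      have hrC : (r : ℂ) ≠ 0 := by exact_mod_cast hrne
      have hsC : (s : ℂ) ≠ 0 := by exact_mod_cast hsne
      have hrpow : (r : ℂ) ^ n = (r : ℂ) ^ (n - 1) * (r : ℂ) := by
        rw [← pow_succ]; congr 1; omega
      have hspow : (s : ℂ) ^ m = (s : ℂ) ^ (m - 1) * (s : ℂ) := by
        rw [← pow_succ]; congr 1; omega
      rw [mul_pow, hrpow, hspow, hen]
      have hZ0X : Z0 = ((r * s : ℝ) : ℂ) * Complex.exp (↑Z0.arg * Complex.I) := by
        rw [hrt, hX]
        exact (Complex.norm_mul_exp_arg_mul_I Z0).symm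
      push_cast at hZ0X
      field_simp
      linear_combination -hZ0X
  refine ⟨p, ?_⟩
  ext i
  fin_cases i
  · show (![(Zc m n p).re, (Zc m n p).im, Yr p] : Fin 3 → ℝ) 0 = v 0
    simp [hZeq, hZ0]
  · show (![(Zc m n p).re, (Zc m n p).im, Yr p] : Fin 3 → ℝ) 1 = v 1
    simp [hZeq, hZ0]
  · show (![(Zc m n p).re, (Zc m n p).im, Yr p] : Fin 3 → ℝ) 2 = v 2
    simp only [Matrix.cons_val_two, Matrix.tail_cons, Matrix.head_cons]
    show Yr p = v 2
    unfold Yr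
    rw [hrrp, httt]
    exact hty

end Pao

open Pao

/-- For positive coprime `m`, `n`, the orbit space of the Pao model action on `D² × S²`
(the quotient by the orbit equivalence relation, with the quotient topology) is
homeomorphic to the closed unit ball in `ℝ³`. -/
theorem stmt11 (m n : ℕ) (hm : 0 < m) (hn : 0 < n) (hmn : Nat.Coprime m n) :
    Nonempty
      ((Quot fun x y : D2 × S2 => ∃ g : Circle, paoAct m n g x = y) ≃ₜ
        Metric.closedBall (0 : EuclideanSpace ℝ (Fin 3)) 1) := by
  haveI hD2 : CompactSpace D2 := by
    have hset : IsCompact {ζ : ℂ | ‖ζ‖ ≤ 1} := by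
      have h2 : {ζ : ℂ | ‖ζ‖ ≤ 1} = Metric.closedBall 0 1 := by
        ext z
        rw [Set.mem_setOf_eq, Metric.mem_closedBall, dist_zero_right]
      rw [h2]
      exact isCompact_closedBall 0 1
    exact isCompact_iff_compactSpace.mp hset
  haveI hS2 : CompactSpace S2 := by
    have hset : IsCompact {p : ℂ × ℝ | ‖p.1‖ ^ 2 + p.2 ^ 2 = 1} := by
      apply IsCompact.of_isClosed_subset (isCompact_closedBall (0 : ℂ × ℝ) 1)
      · exact isClosed_eq (by continuity) continuous_const
      · intro x hx
        rw [Set.mem_setOf_eq] at hx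
        rw [Metric.mem_closedBall, dist_zero_right, Prod.norm_def]
        have h1 : ‖x.1‖ ≤ 1 := by
          nlinarith [norm_nonneg x.1, sq_nonneg x.2]
        have h2 : |x.2| ≤ 1 := by
          nlinarith [norm_nonneg x.1, sq_nonneg (‖x.1‖),
            abs_nonneg x.2, _root_.sq_abs x.2]
        rw [Real.norm_eq_abs]
        exact max_le h1 h2
    exact isCompact_iff_compactSpace.mp hset
  set rel := fun x y : D2 × S2 => ∃ g : Circle, paoAct m n g x = y with hrel
  let F' : D2 × S2 → Metric.closedBall (0 : EuclideanSpace ℝ (Fin 3)) 1 :=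
    fun p => ⟨Fm m n p, by
      rw [Metric.mem_closedBall, dist_zero_right]
      exact norm_Fm_le m n hm hn p⟩
  have hinv : ∀ a b : D2 × S2, rel a b → F' a = F' b := by
    rintro a b ⟨g, rfl⟩
    exact Subtype.ext (Fm_act m n g a).symm
  refine ⟨Continuous.homeoOfEquivCompactToT2
    (f := Equiv.ofBijective (Quot.lift F' hinv) ⟨?_, ?_⟩) ?_⟩
  · intro x y
    refine Quot.induction_on₂ x y ?_
    intro a b h
    have h' : Fm m n a = Fm m n b := Subtype.ext_iff.mp h
    exact Quot.sound (orbit_of_Fm_eq m n hm hn hmn a b h')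
  · rintro ⟨v, hv⟩
    rw [Metric.mem_closedBall, dist_zero_right] at hv
    obtain ⟨p, hp⟩ := Fm_surj m n hm hn v hv
    exact ⟨Quot.mk rel p, Subtype.ext hp⟩
  · exact continuous_quot_lift hinv ((continuous_Fm m n hm hn).subtype_mk _)
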